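/- Let G be a finite abelian group with |G| > 1. Then m(G,2) = D(G). -/

import Mathlib

/-- A minimal zero-sum sequence over an abelian group: a nonempty zero-sum sequence
no proper nonempty subsequence of which has sum zero. -/
def IsMinZS {G : Type*} [AddCommGroup G] (S : Multiset G) : Prop :=
  S ≠ 0 ∧ S.sum = 0 ∧ ∀ T : Multiset G, T ≤ S → T ≠ 0 → T ≠ S → T.sum ≠ 0

/-- The Davenport constant: the maximal length of a minimal zero-sum sequence. -/
noncomputable def davenport (G : Type*) [AddCommGroup G] : ℕ :=
  sSup { n | ∃ S : Multiset G, IsMinZS S ∧ Multiset.card S = n }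

/-- The invariant m(G,t): the smallest ℓ such that every sequence over G∖{0} of length
at least ℓ with multiplicity of each g at most ord(g) has a minimal zero-sum
subsequence of length at least t. -/
noncomputable def mInv (G : Type*) [AddCommGroup G] [DecidableEq G] (t : ℕ) : ℕ :=
  sInf { ℓ | ∀ S : Multiset G, (∀ g ∈ S, g ≠ 0) →
    (∀ g : G, g ≠ 0 → S.count g ≤ addOrderOf g) → ℓ ≤ Multiset.card S →
    ∃ T, T ≤ S ∧ IsMinZS T ∧ t ≤ Multiset.card T }

section Aux

variable {G : Type*} [AddCommGroup G]

/-- Every minimal zero-sum sequence has length at most `|G|` (prefix-sum argument). -/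
lemma minZS_card_le [Fintype G] (U : Multiset G) (hU : IsMinZS U) :
    Multiset.card U ≤ Fintype.card G := by
  induction U using Quotient.inductionOn with
  | h l =>
    obtain ⟨hne, hsum, hmin⟩ := hU
    set n := l.length with hn
    have key : ∀ i j : Fin n, i < j → (l.take ((i:ℕ)+1)).sum ≠ (l.take ((j:ℕ)+1)).sum := by
      intro i j hij heq
      set seg := (l.drop ((i:ℕ)+1)).take ((j:ℕ) - (i:ℕ)) with hseg
      have hsplit : l.take ((j:ℕ)+1) = l.take ((i:ℕ)+1) ++ seg := by
        have h1 : (j : ℕ) + 1 = ((i:ℕ) + 1) + ((j:ℕ) - (i:ℕ)) := by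
          have := Fin.lt_iff_val_lt_val.mp hij; omega
        rw [h1, List.take_add]
      have hsegsum : seg.sum = 0 := by
        have h2 := congrArg List.sum hsplit
        rw [List.sum_append, ← heq, left_eq_add] at h2
        exact h2
      have hlen : seg.length = (j:ℕ) - (i:ℕ) := by
        rw [hseg, List.length_take, List.length_drop]
        have := j.isLt; have := Fin.lt_iff_val_lt_val.mp hij
        omega
      have hle : (↑seg : Multiset G) ≤ ↑l := by
        rw [Multiset.coe_le]
        exact ((List.take_sublist _ _).trans (List.drop_sublist _ _)).subperm
      have hne0 : (↑seg : Multiset G) ≠ 0 := by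
        rw [Ne, Multiset.coe_eq_zero, ← List.length_eq_zero_iff]
        have := Fin.lt_iff_val_lt_val.mp hij
        omega
      have hneU : (↑seg : Multiset G) ≠ ↑l := by
        intro h
        have := congrArg Multiset.card h
        rw [Multiset.coe_card, Multiset.coe_card, hlen] at this
        have := j.isLt
        omega
      exact hmin _ hle hne0 hneU hsegsum
    have hinj : Function.Injective (fun i : Fin n => (l.take ((i:ℕ)+1)).sum) := by
      intro i j h
      rcases lt_trichotomy i j with h' | h' | h'
      · exact absurd h (key i j h')
      · exact h'
      · exact absurd h.symm (key j i h')
    have := Fintype.card_le_of_injective _ hinj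
    simpa [Multiset.coe_card] using this

lemma replicate_isMinZS [Fintype G] (g : G) (hg : g ≠ 0) :
    IsMinZS (Multiset.replicate (addOrderOf g) g) := by
  have hpos : 0 < addOrderOf g := addOrderOf_pos g
  refine ⟨?_, ?_, ?_⟩
  · intro h
    have := congrArg Multiset.card h
    rw [Multiset.card_replicate, Multiset.card_zero] at this
    omega
  · rw [Multiset.sum_replicate, addOrderOf_nsmul_eq_zero]
  · intro T hT hT0 hTne hTsum
    obtain ⟨k, hk, rfl⟩ := Multiset.le_replicate_iff.mp hT
    have hk0 : 0 < k := by
      rcases Nat.eq_zero_or_pos k with h | h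
      · subst h; simp at hT0
      · exact h
    have hklt : k < addOrderOf g := by
      rcases lt_or_eq_of_le hk with h | h
      · exact h
      · subst h; exact absurd rfl hTne
    rw [Multiset.sum_replicate] at hTsum
    have hdvd : addOrderOf g ∣ k := addOrderOf_dvd_iff_nsmul_eq_zero.mpr hTsum
    have := Nat.le_of_dvd hk0 hdvd
    omega

/-- Extract a minimal zero-sum subsequence from a nonempty zero-sum sequence. -/
lemma exists_minZS_le (T : Multiset G) (hT0 : T ≠ 0) (hTsum : T.sum = 0) :
    ∃ T', T' ≤ T ∧ IsMinZS T' := by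
  generalize hn : Multiset.card T = n
  induction n using Nat.strong_induction_on generalizing T with
  | _ n ih =>
    by_cases hmin : ∀ W : Multiset G, W ≤ T → W ≠ 0 → W ≠ T → W.sum ≠ 0
    · exact ⟨T, le_refl _, hT0, hTsum, hmin⟩
    · push_neg at hmin
      obtain ⟨W, hWT, hW0, hWne, hWsum⟩ := hmin
      have hlt : Multiset.card W < n := by
        rw [← hn]; exact Multiset.card_lt_card (lt_of_le_of_ne hWT hWne)
      obtain ⟨T', hT'W, hT'⟩ := ih _ hlt W hW0 hWsum rfl
      exact ⟨T', hT'W.trans hWT, hT'⟩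

end Aux

theorem stmt1 (G : Type*) [AddCommGroup G] [Fintype G] [DecidableEq G]
    (hG : 1 < Fintype.card G) :
    mInv G 2 = davenport G := by
  classical
  set Dset : Set ℕ := { n | ∃ S : Multiset G, IsMinZS S ∧ Multiset.card S = n } with hDset
  have hbdd : BddAbove Dset := by
    refine ⟨Fintype.card G, fun n hn => ?_⟩
    obtain ⟨S, hS, rfl⟩ := hn
    exact minZS_card_le S hS
  obtain ⟨g, hg⟩ : ∃ g : G, g ≠ 0 := by
    have : Nontrivial G := Fintype.one_lt_card_iff_nontrivial.mp hG
    exact exists_ne 0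
  have hord2 : 2 ≤ addOrderOf g := by
    have h1 : addOrderOf g ≠ 1 := fun h => hg (AddMonoid.addOrderOf_eq_one_iff.mp h)
    have := addOrderOf_pos g
    omega
  have hDne : Dset.Nonempty :=
    ⟨Multiset.card (Multiset.replicate (addOrderOf g) g),
      Multiset.replicate (addOrderOf g) g, replicate_isMinZS g hg, rfl⟩
  have hDmem : davenport G ∈ Dset := Nat.sSup_mem hDne hbdd
  have h2D : 2 ≤ davenport G := by
    have hmem : addOrderOf g ∈ Dset := by
      refine ⟨Multiset.replicate (addOrderOf g) g, replicate_isMinZS g hg, ?_⟩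
      simp [Multiset.card_replicate]
    exact le_trans hord2 (le_csSup hbdd hmem)
  set mSet : Set ℕ := { ℓ | ∀ S : Multiset G, (∀ g ∈ S, g ≠ 0) →
    (∀ g : G, g ≠ 0 → S.count g ≤ addOrderOf g) → ℓ ≤ Multiset.card S →
    ∃ T, T ≤ S ∧ IsMinZS T ∧ 2 ≤ Multiset.card T } with hmSet
  -- D(G) is in the mInv-defining set
  have hDinm : davenport G ∈ mSet := by
    intro S hS0 _ hlen
    -- S has a nonempty zero-sum subsequence
    have hzs : ∃ T, T ≤ S ∧ T ≠ 0 ∧ T.sum = 0 := by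
      by_contra hzsf
      push_neg at hzsf
      set U : Multiset G := (-S.sum) ::ₘ S with hUdef
      have hUmin : IsMinZS U := by
        refine ⟨Multiset.cons_ne_zero, by rw [hUdef, Multiset.sum_cons, neg_add_cancel], ?_⟩
        intro T hT hT0 hTU hTsum
        by_cases hTS : T ≤ S
        · exact hzsf T hTS hT0 hTsum
        · have hTe : T.erase (-S.sum) ≤ S := Multiset.erase_le_iff_le_cons.mpr hT
          have hmem : -S.sum ∈ T := by
            by_contra hmem
            rw [Multiset.erase_of_notMem hmem] at hTe
            exact hTS hTe
          have hsumTe : (T.erase (-S.sum)).sum = S.sum := by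
            have h5 := Multiset.sum_erase hmem
            rw [hTsum] at h5
            rw [neg_add_eq_zero] at h5
            exact h5.symm
          set R : Multiset G := S - T.erase (-S.sum) with hR
          have hRle : R ≤ S := Multiset.sub_le_self _ _
          have hRsum : R.sum = 0 := by
            have hadd : R + T.erase (-S.sum) = S :=
              tsub_add_cancel_of_le hTe
            have := congrArg Multiset.sum hadd
            rw [Multiset.sum_add, hsumTe] at this
            have h6 : R.sum + S.sum = 0 + S.sum := by rw [zero_add]; exact this
            exact add_right_cancel h6
          have hR0 : R ≠ 0 := by
            intro h
            have hTeS : T.erase (-S.sum) = S :=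
              le_antisymm hTe (tsub_eq_zero_iff_le.mp h)
            apply hTU
            rw [← Multiset.cons_erase hmem, hTeS]
          exact hzsf R hRle hR0 hRsum
      have hcard : Multiset.card U ≤ davenport G :=
        le_csSup hbdd ⟨U, hUmin, rfl⟩
      rw [hUdef, Multiset.card_cons] at hcard
      omega
    obtain ⟨T, hTS, hT0, hTsum⟩ := hzs
    obtain ⟨T', hT'T, hT'⟩ := exists_minZS_le T hT0 hTsum
    refine ⟨T', hT'T.trans hTS, hT', ?_⟩
    have h1 : 1 ≤ Multiset.card T' := Multiset.card_pos.mpr hT'.1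
    rcases Nat.lt_or_ge (Multiset.card T') 2 with h | h
    · exfalso
      have hc1 : Multiset.card T' = 1 := by omega
      obtain ⟨a, ha⟩ := Multiset.card_eq_one.mp hc1
      have haS : a ∈ S := Multiset.mem_of_le (hT'T.trans hTS) (by simp [ha])
      have : T'.sum = a := by simp [ha]
      exact hS0 a haS (by rw [← this, hT'.2.1])
    · exact h
  -- every element of mSet is ≥ D(G)
  have hge : ∀ ℓ ∈ mSet, davenport G ≤ ℓ := by
    intro ℓ hℓ
    by_contra hcon
    push_neg at hcon
    obtain ⟨U, hU, hUcard⟩ := hDmem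
    have h2U : 2 ≤ Multiset.card U := by omega
    have h0U : (0 : G) ∉ U := by
      intro h0
      refine hU.2.2 {0} (Multiset.singleton_le.mpr h0) (by simp) ?_ (by simp)
      intro h
      have := congrArg Multiset.card h
      simp [hUcard] at this
      omega
    obtain ⟨x, hx⟩ := Multiset.exists_mem_of_ne_zero hU.1
    set S : Multiset G := U.erase x with hSdef
    have hSle : S ≤ U := Multiset.erase_le x U
    have hScard : Multiset.card S = davenport G - 1 := by
      rw [hSdef, Multiset.card_erase_of_mem hx, hUcard, Nat.pred_eq_sub_one]
    obtain ⟨T, hTS, hT, hTcard⟩ := hℓ S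
      (fun g hgS => fun h => h0U (h ▸ Multiset.mem_of_le hSle hgS))
      (fun g hg0 => by
        by_contra hcnt
        push_neg at hcnt
        have hcnt' : addOrderOf g < U.count g :=
          lt_of_lt_of_le hcnt (Multiset.count_le_of_le g hSle)
        have hrep : Multiset.replicate (addOrderOf g) g ≤ U :=
          Multiset.le_count_iff_replicate_le.mp (le_of_lt hcnt')
        have hpos : 0 < addOrderOf g := addOrderOf_pos g
        refine hU.2.2 _ hrep ?_ ?_ ?_
        · intro h
          have := congrArg Multiset.card h
          rw [Multiset.card_replicate, Multiset.card_zero] at this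
          omega
        · intro h
          have := congrArg Multiset.card h
          rw [Multiset.card_replicate] at this
          have := Multiset.count_le_card g U
          omega
        · rw [Multiset.sum_replicate, addOrderOf_nsmul_eq_zero])
      (by omega)
    refine hU.2.2 T (hTS.trans hSle) hT.1 ?_ hT.2.1
    intro h
    have hc := Multiset.card_le_card hTS
    rw [h, hUcard, hScard] at hc
    omega
  have hmem' : davenport G ∈ mSet := hDinm
  apply le_antisymm
  · exact Nat.sInf_le hmem'
  · exact le_csInf ⟨_, hmem'⟩ hge
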